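/- Let 0 < h ≤ 1 and f : ℝ^{n−1} → [0,1] measurable with ∫ f dγ^{n−1} = h. Then ∫ (q(h) − q(f(x))) dγ^{n−1}(x) ≥ ∫ (f(x) − h)² dγ^{n−1}(x). -/

import Mathlib

open MeasureTheory ProbabilityTheory Real Set Filter Topology

noncomputable def gamma1 : Measure ℝ := gaussianReal 0 1

noncomputable def Phi (t : ℝ) : ℝ :=
  ∫ s in Set.Iic t, (Real.sqrt (2 * Real.pi))⁻¹ * Real.exp (-s ^ 2 / 2)

noncomputable def Psi : ℝ → ℝ := Function.invFun Phi
noncomputable def Q (s : ℝ) : ℝ :=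
  if 0 < s ∧ s < 1 then (Real.sqrt (2 * Real.pi))⁻¹ * Real.exp (-(Psi s) ^ 2 / 2) else 0

noncomputable def stdGaussian (n : ℕ) : Measure (EuclideanSpace ℝ (Fin n)) :=
  Measure.map (MeasurableEquiv.toLp 2 (Fin n → ℝ))
    (Measure.pi fun _ : Fin n => gaussianReal 0 1)

noncomputable def phi (t : ℝ) : ℝ := (Real.sqrt (2 * Real.pi))⁻¹ * Real.exp (-t ^ 2 / 2)

lemma phi_pos (t : ℝ) : 0 < phi t := by
  apply mul_pos (inv_pos.2 (Real.sqrt_pos.2 (by positivity))) (Real.exp_pos _)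

lemma phi_le (t : ℝ) : phi t ≤ (Real.sqrt (2 * Real.pi))⁻¹ := by
  have h1 : Real.exp (-t ^ 2 / 2) ≤ 1 := by
    rw [Real.exp_le_one_iff]; nlinarith [sq_nonneg t]
  calc phi t ≤ (Real.sqrt (2 * Real.pi))⁻¹ * 1 := by
        exact mul_le_mul_of_nonneg_left h1 (by positivity)
    _ = _ := mul_one _

lemma phi_cont : Continuous phi := by
  unfold phi
  continuity

lemma integrable_phi : Integrable phi := by
  have : Integrable (fun x : ℝ => Real.exp (-(1/2) * x ^ 2)) := integrable_exp_neg_mul_sq (by norm_num)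
  have := this.const_mul (Real.sqrt (2 * Real.pi))⁻¹
  apply this.congr
  filter_upwards with x
  unfold phi
  ring_nf

lemma integral_phi : ∫ t, phi t = 1 := by
  have h : ∫ x : ℝ, Real.exp (-(1/2) * x ^ 2) = Real.sqrt (Real.pi / (1/2)) :=
    integral_gaussian (1/2)
  have h2 : ∫ t, phi t = (Real.sqrt (2 * Real.pi))⁻¹ * ∫ x : ℝ, Real.exp (-(1/2) * x ^ 2) := by
    rw [← integral_const_mul]
    congr 1 with x
    unfold phi; ring_nf
  rw [h2, h]
  have : Real.pi / (1/2) = 2 * Real.pi := by ring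
  rw [this, inv_mul_cancel₀ (by positivity)]

lemma Phi_eq (t : ℝ) : Phi t = ∫ s in Set.Iic t, phi s := rfl

lemma Phi_sub_Phi (a b : ℝ) : Phi b - Phi a = ∫ s in a..b, phi s := by
  rw [Phi_eq, Phi_eq]
  exact intervalIntegral.integral_Iic_sub_Iic integrable_phi.integrableOn integrable_phi.integrableOn

lemma Phi_hasDerivAt (t : ℝ) : HasDerivAt Phi (phi t) t := by
  have key : HasDerivAt (fun u => ∫ s in (0:ℝ)..u, phi s) (phi t) t :=
    intervalIntegral.integral_hasDerivAt_right
      (integrable_phi.intervalIntegrable)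
      (phi_cont.stronglyMeasurableAtFilter _ _) phi_cont.continuousAt
  have : Phi = fun u => Phi 0 + ∫ s in (0:ℝ)..u, phi s := by
    funext u
    rw [← Phi_sub_Phi 0 u]; ring
  rw [this]
  simpa using key.const_add (Phi 0)

lemma Phi_strictMono : StrictMono Phi :=
  strictMono_of_deriv_pos (fun t => by rw [(Phi_hasDerivAt t).deriv]; exact phi_pos t)

lemma Phi_continuous : Continuous Phi :=
  continuous_iff_continuousAt.2 fun t => (Phi_hasDerivAt t).continuousAt

lemma Phi_tendsto_atBot : Tendsto Phi atBot (𝓝 0) := by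
  have h := MeasureTheory.intervalIntegral_tendsto_integral_Iic (f := phi) (μ := volume)
    (a := fun t : ℝ => t) 0 integrable_phi.integrableOn tendsto_id
  have : Tendsto (fun t => Phi 0 - ∫ s in t..(0:ℝ), phi s) atBot (𝓝 (Phi 0 - ∫ s in Iic 0, phi s)) :=
    tendsto_const_nhds.sub h
  rw [← Phi_eq, sub_self] at this
  apply this.congr
  intro t
  rw [← Phi_sub_Phi t 0]; ring

lemma Phi_tendsto_atTop : Tendsto Phi atTop (𝓝 1) := by
  have h := MeasureTheory.intervalIntegral_tendsto_integral_Ioi (f := phi) (μ := volume)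
    (b := fun t : ℝ => t) 0 integrable_phi.integrableOn tendsto_id
  have h2 : Tendsto (fun t => Phi 0 + ∫ s in (0:ℝ)..t, phi s) atTop
      (𝓝 (Phi 0 + ∫ s in Ioi 0, phi s)) := tendsto_const_nhds.add h
  have key : Phi 0 + ∫ s in Ioi 0, phi s = 1 := by
    rw [Phi_eq, intervalIntegral.integral_Iic_add_Ioi (μ := volume)
      integrable_phi.integrableOn integrable_phi.integrableOn]
    exact integral_phi
  rw [key] at h2
  apply h2.congr
  intro t
  rw [← Phi_sub_Phi 0 t]; ring

lemma Phi_mem_Ioo (t : ℝ) : Phi t ∈ Ioo (0:ℝ) 1 := by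
  have mono := Phi_strictMono
  constructor
  · -- 0 < Phi t : Phi (t-1) < Phi t and Phi ≥ 0... use limit at -∞ plus strict mono
    have h1 : Phi (t - 1) < Phi t := mono (by linarith)
    have h2 : 0 ≤ Phi (t - 1) := by
      rw [Phi_eq]
      exact MeasureTheory.setIntegral_nonneg measurableSet_Iic fun s _ => (phi_pos s).le
    linarith
  · have h1 : Phi t < Phi (t + 1) := mono (by linarith)
    have h2 : Phi (t + 1) ≤ 1 := by
      have := (Phi_strictMono.monotone.ge_of_tendsto Phi_tendsto_atTop (t+1))
      exact this
    linarith


lemma Phi_surjOn : ∀ s ∈ Ioo (0:ℝ) 1, ∃ t, Phi t = s := by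
  intro s hs
  obtain ⟨a, ha⟩ : ∃ a, Phi a < s := by
    have := Phi_tendsto_atBot.eventually_lt_const hs.1
    exact this.exists
  obtain ⟨b, hb⟩ : ∃ b, s < Phi b := by
    have := Phi_tendsto_atTop.eventually_const_lt hs.2
    exact this.exists
  have hab : a ≤ b := by
    by_contra hcon
    exact absurd (Phi_strictMono (lt_of_not_ge hcon)) (by linarith)
  obtain ⟨t, _, ht⟩ := intermediate_value_Icc hab (Phi_continuous.continuousOn) ⟨ha.le, hb.le⟩
  exact ⟨t, ht⟩

lemma Phi_Psi {s : ℝ} (hs : s ∈ Ioo (0:ℝ) 1) : Phi (Psi s) = s :=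
  Function.invFun_eq (Phi_surjOn s hs)

lemma Psi_Phi (t : ℝ) : Psi (Phi t) = t :=
  Function.leftInverse_invFun Phi_strictMono.injective t

lemma Psi_strictMonoOn : StrictMonoOn Psi (Ioo (0:ℝ) 1) := by
  intro a ha b hb hab
  have h1 : Phi (Psi a) < Phi (Psi b) := by rw [Phi_Psi ha, Phi_Psi hb]; exact hab
  exact Phi_strictMono.lt_iff_lt.1 h1

lemma Psi_image : Psi '' (Ioo (0:ℝ) 1) = univ := by
  apply eq_univ_of_forall
  intro t
  exact ⟨Phi t, Phi_mem_Ioo t, Psi_Phi t⟩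

lemma Psi_continuousAt {s : ℝ} (hs : s ∈ Ioo (0:ℝ) 1) : ContinuousAt Psi s := by
  apply Psi_strictMonoOn.continuousAt_of_image_mem_nhds
    (Ioo_mem_nhds hs.1 hs.2)
  rw [Psi_image]
  exact univ_mem

lemma Psi_hasDerivAt {s : ℝ} (hs : s ∈ Ioo (0:ℝ) 1) :
    HasDerivAt Psi (phi (Psi s))⁻¹ s := by
  apply HasDerivAt.of_local_left_inverse (Psi_continuousAt hs)
    (Phi_hasDerivAt (Psi s)) (ne_of_gt (phi_pos _))
  filter_upwards [Ioo_mem_nhds hs.1 hs.2] with x hx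
  exact Phi_Psi hx

lemma Psi_tendsto_zero : Tendsto Psi (𝓝[>] (0:ℝ)) atBot := by
  rw [tendsto_atBot]
  intro M
  have h1 : Phi M ∈ Ioo (0:ℝ) 1 := Phi_mem_Ioo M
  filter_upwards [Ioo_mem_nhdsGT_of_mem (by constructor <;> [exact le_refl 0; exact h1.1] : (0:ℝ) ∈ Ico 0 (Phi M))] with s hs
  have : Psi s < Psi (Phi M) := Psi_strictMonoOn ⟨hs.1, hs.2.trans h1.2⟩ h1 hs.2
  rw [Psi_Phi] at this
  exact this.le

lemma Psi_tendsto_one : Tendsto Psi (𝓝[<] (1:ℝ)) atTop := by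
  rw [tendsto_atTop]
  intro M
  have h1 : Phi M ∈ Ioo (0:ℝ) 1 := Phi_mem_Ioo M
  filter_upwards [Ioo_mem_nhdsLT_of_mem (by constructor <;> [exact h1.2; exact le_refl 1] : (1:ℝ) ∈ Ioc (Phi M) 1)] with s hs
  have : Psi (Phi M) < Psi s := Psi_strictMonoOn h1 ⟨h1.1.trans hs.1, hs.2⟩ hs.1
  rw [Psi_Phi] at this
  exact this.le

lemma sq_tendsto_atBot : Tendsto (fun t : ℝ => t ^ 2) atBot atTop := by
  have h : Tendsto (fun t : ℝ => (-t) ^ 2) atBot atTop :=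
    (tendsto_pow_atTop two_ne_zero).comp tendsto_neg_atBot_atTop
  apply h.congr
  intro t; ring

lemma phi_tendsto_atBot : Tendsto phi atBot (𝓝 0) := by
  have h1 : Tendsto (fun t : ℝ => -t ^ 2 / 2) atBot atBot := by
    apply Tendsto.atBot_div_const two_pos
    exact tendsto_neg_atTop_atBot.comp sq_tendsto_atBot
  have h2 : Tendsto phi atBot (𝓝 ((Real.sqrt (2 * Real.pi))⁻¹ * 0)) :=
    (Real.tendsto_exp_atBot.comp h1).const_mul _
  rwa [mul_zero] at h2

lemma phi_tendsto_atTop : Tendsto phi atTop (𝓝 0) := by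
  have h1 : Tendsto (fun t : ℝ => -t ^ 2 / 2) atTop atBot := by
    apply Tendsto.atBot_div_const two_pos
    exact tendsto_neg_atTop_atBot.comp (tendsto_pow_atTop two_ne_zero)
  have h2 : Tendsto phi atTop (𝓝 ((Real.sqrt (2 * Real.pi))⁻¹ * 0)) :=
    (Real.tendsto_exp_atBot.comp h1).const_mul _
  rwa [mul_zero] at h2

lemma Q_eq {s : ℝ} (hs : s ∈ Ioo (0:ℝ) 1) : Q s = phi (Psi s) := by
  unfold Q phi
  rw [if_pos ⟨hs.1, hs.2⟩]

lemma Q_eq_zero {s : ℝ} (hs : s ∉ Ioo (0:ℝ) 1) : Q s = 0 := by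
  unfold Q
  rw [if_neg (fun hc => hs ⟨hc.1, hc.2⟩)]

lemma Q_tendsto_zero : Tendsto Q (𝓝[>] (0:ℝ)) (𝓝 0) := by
  have h : Tendsto (fun s => phi (Psi s)) (𝓝[>] (0:ℝ)) (𝓝 0) :=
    phi_tendsto_atBot.comp Psi_tendsto_zero
  apply h.congr'
  filter_upwards [Ioo_mem_nhdsGT_of_mem (left_mem_Ico.2 one_pos)] with s hs
  exact (Q_eq hs).symm

lemma Q_tendsto_one : Tendsto Q (𝓝[<] (1:ℝ)) (𝓝 0) := by
  have h : Tendsto (fun s => phi (Psi s)) (𝓝[<] (1:ℝ)) (𝓝 0) :=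
    phi_tendsto_atTop.comp Psi_tendsto_one
  apply h.congr'
  filter_upwards [Ioo_mem_nhdsLT_of_mem (right_mem_Ioc.2 one_pos)] with s hs
  exact (Q_eq hs).symm

lemma Q_continuous : Continuous Q := by
  rw [continuous_iff_continuousAt]
  intro s
  rcases lt_trichotomy s 0 with hs | rfl | hs
  · have : ∀ᶠ x in 𝓝 s, Q x = 0 := by
      filter_upwards [Iio_mem_nhds hs] with x hx
      exact Q_eq_zero (fun hc => absurd hc.1 (not_lt.2 hx.le))
    exact (continuousAt_const (y := (0:ℝ))).congr (this.mono fun x hx => hx.symm) |>.congr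
      (by filter_upwards [this] with x hx; rw [hx])
  · rw [continuousAt_iff_continuous_left'_right']
    constructor
    · have hq0 : Q 0 = 0 := Q_eq_zero (by simp)
      rw [ContinuousWithinAt, hq0]
      apply Tendsto.congr' _ (tendsto_const_nhds (x := (0:ℝ)))
      filter_upwards [self_mem_nhdsWithin] with x (hx : x < 0)
      exact (Q_eq_zero (fun hc => absurd hc.1 (not_lt.2 hx.le))).symm
    · rw [ContinuousWithinAt, Q_eq_zero (by simp)]
      exact Q_tendsto_zero
  · rcases lt_trichotomy s 1 with hs1 | rfl | hs1
    · have : ∀ᶠ x in 𝓝 s, Q x = phi (Psi x) := by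
        filter_upwards [Ioo_mem_nhds hs hs1] with x hx
        exact Q_eq hx
      exact (phi_cont.continuousAt.comp (Psi_continuousAt ⟨hs, hs1⟩)).congr
        (this.mono fun x hx => hx.symm)
    · rw [continuousAt_iff_continuous_left'_right']
      constructor
      · rw [ContinuousWithinAt, Q_eq_zero (by simp)]
        exact Q_tendsto_one
      · rw [ContinuousWithinAt, Q_eq_zero (by simp)]
        apply Tendsto.congr' _ (tendsto_const_nhds (x := (0:ℝ)))
        filter_upwards [self_mem_nhdsWithin] with x (hx : (1:ℝ) < x)
        exact (Q_eq_zero (fun hc => absurd hc.2 (not_lt.2 hx.le))).symm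
    · have : ∀ᶠ x in 𝓝 s, Q x = 0 := by
        filter_upwards [Ioi_mem_nhds hs1] with x hx
        exact Q_eq_zero (fun hc => absurd hc.2 (not_lt.2 hx.le))
      exact continuousAt_const.congr (this.mono fun x hx => hx.symm)

lemma phi_hasDerivAt (t : ℝ) : HasDerivAt phi (-t * phi t) t := by
  have h1 : HasDerivAt (fun t : ℝ => -t ^ 2 / 2) (-t) t := by
    have := ((hasDerivAt_pow 2 t).neg).div_const 2
    exact this.congr_deriv (by norm_num; ring)
  have h2 := (h1.exp).const_mul (Real.sqrt (2 * Real.pi))⁻¹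
  unfold phi
  exact h2.congr_deriv (by ring)

lemma sqrt_two_pi_gt_two : (2:ℝ) < Real.sqrt (2 * Real.pi) := by
  rw [Real.lt_sqrt (by positivity)]
  nlinarith [Real.pi_gt_three]

lemma inv_phi_gt_two (t : ℝ) : (2:ℝ) < (phi t)⁻¹ := by
  have h1 : phi t < 2⁻¹ := by
    have := phi_le t
    have h2 : (Real.sqrt (2 * Real.pi))⁻¹ < 2⁻¹ := by
      apply inv_strictAnti₀ two_pos sqrt_two_pi_gt_two
    linarith
  calc (2:ℝ) = (2⁻¹)⁻¹ := by norm_num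
    _ < (phi t)⁻¹ := by
        apply inv_strictAnti₀ (phi_pos t) h1

lemma G_strictMonoOn : StrictMonoOn (fun s => Psi s - 2 * s) (Ioo (0:ℝ) 1) := by
  apply strictMonoOn_of_hasDerivWithinAt_pos (convex_Ioo 0 1)
  · exact ContinuousOn.sub (fun s hs => ((Psi_hasDerivAt hs).continuousAt.continuousWithinAt))
      (continuousOn_const.mul continuousOn_id)
  · intro s hs
    rw [interior_Ioo] at hs
    exact ((Psi_hasDerivAt hs).sub ((hasDerivAt_id s).const_mul 2)).hasDerivWithinAt
  · intro s hs
    rw [interior_Ioo] at hs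
    have := inv_phi_gt_two (Psi s)
    linarith

lemma Q_hasDerivAt {s : ℝ} (hs : s ∈ Ioo (0:ℝ) 1) : HasDerivAt Q (-(Psi s)) s := by
  have hcomp : HasDerivAt (fun u => phi (Psi u)) (-(Psi s) * phi (Psi s) * (phi (Psi s))⁻¹) s :=
    (phi_hasDerivAt (Psi s)).comp s (Psi_hasDerivAt hs)
  have heq : -(Psi s) * phi (Psi s) * (phi (Psi s))⁻¹ = -(Psi s) := by
    rw [mul_assoc, mul_inv_cancel₀ (ne_of_gt (phi_pos _)), mul_one]
  rw [heq] at hcomp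
  apply hcomp.congr_of_eventuallyEq
  filter_upwards [Ioo_mem_nhds hs.1 hs.2] with x hx
  exact Q_eq hx

lemma F_hasDerivAt (h : ℝ) {s : ℝ} (hs : s ∈ Ioo (0:ℝ) 1) :
    HasDerivAt (fun u => Q u - Q h + Psi h * (u - h) + (u - h) ^ 2)
      (-(Psi s) + Psi h + 2 * (s - h)) s := by
  have h1 : HasDerivAt (fun u : ℝ => Psi h * (u - h)) (Psi h) s := by
    have := ((hasDerivAt_id s).sub_const h).const_mul (Psi h)
    simpa using this
  have h2 : HasDerivAt (fun u : ℝ => (u - h) ^ 2) (2 * (s - h)) s := by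
    have := (((hasDerivAt_id s).sub_const h).pow 2)
    simpa [Pi.pow_def] using this
  exact (((Q_hasDerivAt hs).sub_const (Q h)).add h1).add h2

lemma F_continuous (h : ℝ) :
    Continuous (fun u => Q u - Q h + Psi h * (u - h) + (u - h) ^ 2) := by
  apply Continuous.add
  apply Continuous.add
  exact (Q_continuous.sub continuous_const)
  · exact continuous_const.mul (continuous_id.sub continuous_const)
  · exact (continuous_id.sub continuous_const).pow 2

lemma F_le_zero {h : ℝ} (hh : h ∈ Ioo (0:ℝ) 1) {s : ℝ} (hs : s ∈ Icc (0:ℝ) 1) :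
    Q s - Q h + Psi h * (s - h) + (s - h) ^ 2 ≤ 0 := by
  set F : ℝ → ℝ := fun u => Q u - Q h + Psi h * (u - h) + (u - h) ^ 2 with hF
  have hFh : F h = 0 := by simp [hF]
  have step1 : ∀ s ∈ Ioo (0:ℝ) 1, F s ≤ 0 := by
    intro s hs
    rcases lt_trichotomy s h with hlt | rfl | hgt
    · have hmono : StrictMonoOn F (Icc s h) := by
        apply strictMonoOn_of_hasDerivWithinAt_pos (convex_Icc s h)
          ((F_continuous h).continuousOn)
        · intro x hx
          rw [interior_Icc] at hx
          exact (F_hasDerivAt h ⟨hs.1.trans hx.1, hx.2.trans hh.2⟩).hasDerivWithinAt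
        · intro x hx
          rw [interior_Icc] at hx
          have hxI : x ∈ Ioo (0:ℝ) 1 := ⟨hs.1.trans hx.1, hx.2.trans hh.2⟩
          have := G_strictMonoOn hxI hh hx.2
          simp only at this
          linarith
      have := hmono (left_mem_Icc.2 hlt.le) (right_mem_Icc.2 hlt.le) hlt
      linarith [hFh]
    · exact le_of_eq hFh
    · have hanti : StrictAntiOn F (Icc h s) := by
        apply strictAntiOn_of_hasDerivWithinAt_neg (convex_Icc h s)
          ((F_continuous h).continuousOn)
        · intro x hx
          rw [interior_Icc] at hx
          exact (F_hasDerivAt h ⟨hh.1.trans hx.1, hx.2.trans hs.2⟩).hasDerivWithinAt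
        · intro x hx
          rw [interior_Icc] at hx
          have hxI : x ∈ Ioo (0:ℝ) 1 := ⟨hh.1.trans hx.1, hx.2.trans hs.2⟩
          have := G_strictMonoOn hh hxI hx.1
          simp only at this
          linarith
      have := hanti (left_mem_Icc.2 hgt.le) (right_mem_Icc.2 hgt.le) hgt
      linarith [hFh]
  rcases eq_or_lt_of_le hs.1 with h0 | h0
  · have htend : Tendsto F (𝓝[>] (0:ℝ)) (𝓝 (F 0)) :=
      ((F_continuous h).continuousAt).continuousWithinAt
    rw [← h0]
    apply le_of_tendsto htend
    filter_upwards [Ioo_mem_nhdsGT_of_mem (left_mem_Ico.2 one_pos)] with x hx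
    exact step1 x hx
  rcases eq_or_lt_of_le hs.2 with h1 | h1
  · have htend : Tendsto F (𝓝[<] (1:ℝ)) (𝓝 (F 1)) :=
      ((F_continuous h).continuousAt).continuousWithinAt
    rw [h1]
    apply le_of_tendsto htend
    filter_upwards [Ioo_mem_nhdsLT_of_mem (right_mem_Ioc.2 one_pos)] with x hx
    exact step1 x hx
  exact step1 s ⟨h0, h1⟩

lemma Q_nonneg (s : ℝ) : 0 ≤ Q s := by
  unfold Q
  split
  · positivity
  · exact le_refl 0

lemma Q_le_one (s : ℝ) : Q s ≤ 1 := by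
  have h7 := inv_strictAnti₀ two_pos sqrt_two_pi_gt_two
  have h8 : (2:ℝ)⁻¹ < 1 := by norm_num
  have h9 : (0:ℝ) ≤ (Real.sqrt (2 * Real.pi))⁻¹ := inv_nonneg.2 (Real.sqrt_nonneg _)
  unfold Q
  split
  · have h1 : Real.exp (-(Psi s) ^ 2 / 2) ≤ 1 := by
      rw [Real.exp_le_one_iff]; nlinarith [sq_nonneg (Psi s)]
    nlinarith [Real.exp_pos (-(Psi s) ^ 2 / 2)]
  · exact zero_le_one

instance stdGaussian_prob (n : ℕ) : IsProbabilityMeasure (stdGaussian n) :=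
  Measure.isProbabilityMeasure_map ((MeasurableEquiv.toLp 2 (Fin n → ℝ)).measurable.aemeasurable)

theorem q_deficit_dominates_variance (n : ℕ) (h : ℝ) (hh0 : 0 < h) (hh1 : h ≤ 1)
    (f : EuclideanSpace ℝ (Fin n) → ℝ) (hf : Measurable f)
    (hf01 : ∀ x, f x ∈ Set.Icc (0 : ℝ) 1)
    (hint : ∫ x, f x ∂stdGaussian n = h) :
    ∫ x, (f x - h) ^ 2 ∂stdGaussian n
      ≤ ∫ x, (Q h - Q (f x)) ∂stdGaussian n := by
  set μ := stdGaussian n with hμ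
  have bdd : ∀ (g : EuclideanSpace ℝ (Fin n) → ℝ), Measurable g → ∀ C : ℝ,
      (∀ x, |g x| ≤ C) → Integrable g μ := by
    intro g hg C hC
    exact ⟨hg.aestronglyMeasurable,
      MeasureTheory.HasFiniteIntegral.of_bounded (C := C) (ae_of_all _ fun x => hC x)⟩
  have hfint : Integrable f μ := bdd f hf 1 fun x => by
    have := hf01 x; rw [abs_le]; constructor <;> [linarith [this.1]; exact this.2]
  have hsq : Integrable (fun x => (f x - h) ^ 2) μ := by
    apply bdd (fun x => (f x - h) ^ 2) ((hf.sub measurable_const).pow_const 2) 1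
    intro x
    have h1 := (hf01 x).1; have h2 := (hf01 x).2
    rw [abs_le]; constructor <;> nlinarith
  have hQm : Measurable Q := Q_continuous.measurable
  have hQf : Integrable (fun x => Q h - Q (f x)) μ := by
    apply bdd _ (measurable_const.sub ((hQm.comp hf : Measurable fun x => Q (f x)))) 1
    intro x
    have h1 := Q_nonneg h
    have h2 := Q_nonneg (f x)
    have h3 := Q_le_one h
    have h5 := Q_le_one (f x)
    simp only [Function.comp_apply, Pi.sub_apply]
    rw [abs_le]; constructor <;> linarith
  rcases eq_or_lt_of_le hh1 with h1 | h1
  · -- h = 1 : f = 1 a.e.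
    subst h1
    have hz : ∫ x, (1 - f x) ∂μ = 0 := by
      rw [integral_sub (integrable_const 1) hfint, hint]
      simp
    have hg : Integrable (fun x => 1 - f x) μ := by
      apply bdd (fun x => 1 - f x) (measurable_const.sub hf) 1
      intro x
      have := hf01 x
      rw [abs_le]; constructor <;> [linarith [this.2]; linarith [this.1]]
    have hae : (fun x => 1 - f x) =ᵐ[μ] 0 :=
      (MeasureTheory.integral_eq_zero_iff_of_nonneg
        (fun x => by simp only [Pi.zero_apply]; linarith [(hf01 x).2]) hg).1 hz
    have hL : ∫ x, (f x - 1) ^ 2 ∂μ = 0 := by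
      rw [show (0:ℝ) = ∫ _x, (0:ℝ) ∂μ by simp]
      apply integral_congr_ae
      filter_upwards [hae] with x hx
      have hfx : f x = 1 := by simp only [Pi.zero_apply] at hx; linarith
      rw [hfx]; ring
    have hR : ∫ x, (Q 1 - Q (f x)) ∂μ = 0 := by
      rw [show (0:ℝ) = ∫ _x, (0:ℝ) ∂μ by simp]
      apply integral_congr_ae
      filter_upwards [hae] with x hx
      have hfx : f x = 1 := by simp only [Pi.zero_apply] at hx; linarith
      rw [hfx, Q_eq_zero (by simp)]
      ring
    rw [hL, hR]
  · -- 0 < h < 1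
    have hh : h ∈ Ioo (0:ℝ) 1 := ⟨hh0, h1⟩
    have pointwise : ∀ x, (f x - h) ^ 2 ≤ (Q h - Q (f x)) - Psi h * (f x - h) := by
      intro x
      have := F_le_zero hh (hf01 x)
      linarith
    have hlin : Integrable (fun x => Psi h * (f x - h)) μ := by
      apply bdd _ ((hf.sub measurable_const).const_mul (Psi h)) |Psi h|
      intro x
      rw [abs_mul]
      have h2 : |f x - h| ≤ 1 := by
        rw [abs_le]; constructor <;> [linarith [(hf01 x).1]; linarith [(hf01 x).2]]
      calc |Psi h| * |f x - h| ≤ |Psi h| * 1 := by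
            exact mul_le_mul_of_nonneg_left h2 (abs_nonneg _)
        _ = |Psi h| := mul_one _
    have hker : Integrable (fun x => (Q h - Q (f x)) - Psi h * (f x - h)) μ :=
      hQf.sub hlin
    have key : ∫ x, (f x - h) ^ 2 ∂μ
        ≤ ∫ x, ((Q h - Q (f x)) - Psi h * (f x - h)) ∂μ :=
      integral_mono hsq hker pointwise
    have hzero : ∫ x, (f x - h) ∂μ = 0 := by
      rw [integral_sub hfint (integrable_const h), hint, integral_const]
      simp
    calc ∫ x, (f x - h) ^ 2 ∂μ ≤ ∫ x, ((Q h - Q (f x)) - Psi h * (f x - h)) ∂μ := key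
      _ = ∫ x, (Q h - Q (f x)) ∂μ - Psi h * ∫ x, (f x - h) ∂μ := by
          rw [MeasureTheory.integral_sub hQf hlin, integral_const_mul]
      _ = ∫ x, (Q h - Q (f x)) ∂μ := by rw [hzero]; ring
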